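/- Let G be a finite nonabelian TC-group with n = nc(G), and for 1 ≤ k let nc_k denote the number of non-commuting sets of noncentral elements of G of size k. Then for all 1 ≤ j ≤ n the integer inequality (-1)^j·C(n,j) + ∑_{k=1}^{j} (-1)^{j-k}·C(n-k, j-k)·nc_k ≥ 0 holds, where C(a,b) denotes the binomial coefficient. -/

import Mathlib

attribute [local instance] Classical.propDecidable

open Finset

private lemma aux_inner18 (n j i : ℕ) (hij : i ≤ j) (hj : j ≤ n) :
    ∑ k ∈ Finset.range (j+1), (if i ≤ k then
        (-1:ℤ)^(j-k) * ((n-k).choose (j-k) : ℤ) * (((n-i).choose (k-i) : ℤ)) else 0)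
      = if i = j then 1 else 0 := by
  have hfilter : Finset.filter (fun k => i ≤ k) (Finset.range (j+1)) = Finset.Icc i j := by
    ext k; simp [Nat.lt_succ_iff]; omega
  rw [← Finset.sum_filter, hfilter, ← Finset.Ico_add_one_right_eq_Icc, Finset.sum_Ico_eq_sum_range]
  have hd : j + 1 - i = (j - i) + 1 := by omega
  rw [hd]
  set d := j - i with hdd
  set m := n - i with hmm
  have hstep : ∀ t ∈ Finset.range (d+1),
      (-1:ℤ)^(j-(i+t)) * ((n-(i+t)).choose (j-(i+t)) : ℤ) * ((m.choose ((i+t)-i) : ℤ))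
        = ((m.choose d : ℤ)) * ((-1:ℤ)^d * ((-1:ℤ)^t * (d.choose t : ℤ))) := by
    intro t ht
    rw [Finset.mem_range] at ht
    have ht' : t ≤ d := by omega
    have h1 : j - (i+t) = d - t := by omega
    have h2 : n - (i+t) = m - t := by omega
    have h3 : (i+t) - i = t := by omega
    rw [h1, h2, h3]
    have hcm : (m - t).choose (d - t) * m.choose t = m.choose d * d.choose t := by
      have h := Nat.choose_mul (n := m) (k := d) (s := t) ht'
      rw [h]; ring
    have hsign : (-1:ℤ)^(d-t) = (-1:ℤ)^d * (-1:ℤ)^t := by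
      rw [show d = (d-t) + t by omega, pow_add]
      ring_nf
      rw [show d - t + t - t = d - t by omega]
      simp [pow_mul]
      exact neg_one_pow_eq_or ℤ t
    have hcast : (((m-t).choose (d-t) : ℤ)) * ((m.choose t : ℤ)) = ((m.choose d : ℤ)) * ((d.choose t : ℤ)) := by
      exact_mod_cast congrArg (Nat.cast : ℕ → ℤ) hcm
    rw [hsign]
    linear_combination ((-1:ℤ)^d*(-1:ℤ)^t) * hcast
  rw [Finset.sum_congr rfl hstep, ← Finset.mul_sum, ← Finset.mul_sum,
    Int.alternating_sum_range_choose]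
  by_cases h0 : d = 0
  · have : i = j := by omega
    simp [h0, this]
  · have : i ≠ j := by omega
    simp [h0, this]

private lemma aux_key18 (n j : ℕ) (hj : j ≤ n) (f : ℕ → ℤ) :
    ∑ k ∈ Finset.range (j+1), (-1:ℤ)^(j-k) * ((n-k).choose (j-k) : ℤ) *
      (∑ i ∈ Finset.range (k+1), ((n-i).choose (k-i) : ℤ) * f i) = f j := by
  have hinner : ∀ k ∈ Finset.range (j+1),
      (-1:ℤ)^(j-k) * ((n-k).choose (j-k) : ℤ) *
        (∑ i ∈ Finset.range (k+1), ((n-i).choose (k-i) : ℤ) * f i)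
      = ∑ i ∈ Finset.range (j+1), (if i ≤ k then
          (-1:ℤ)^(j-k) * ((n-k).choose (j-k) : ℤ) * (((n-i).choose (k-i) : ℤ)) * f i else 0) := by
    intro k hk
    rw [Finset.mem_range] at hk
    rw [Finset.mul_sum, ← Finset.sum_filter]
    have : Finset.filter (fun i => i ≤ k) (Finset.range (j+1)) = Finset.range (k+1) := by
      ext i; simp [Nat.lt_succ_iff]; omega
    rw [this]
    exact Finset.sum_congr rfl (fun i _ => by ring)
  rw [Finset.sum_congr rfl hinner, Finset.sum_comm]
  have houter : ∀ i ∈ Finset.range (j+1),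
      ∑ k ∈ Finset.range (j+1), (if i ≤ k then
          (-1:ℤ)^(j-k) * ((n-k).choose (j-k) : ℤ) * (((n-i).choose (k-i) : ℤ)) * f i else 0)
      = (if i = j then 1 else 0) * f i := by
    intro i hi
    rw [Finset.mem_range] at hi
    have h1 : ∀ k ∈ Finset.range (j+1), (if i ≤ k then
          (-1:ℤ)^(j-k) * ((n-k).choose (j-k) : ℤ) * (((n-i).choose (k-i) : ℤ)) * f i else 0)
        = (if i ≤ k then
          (-1:ℤ)^(j-k) * ((n-k).choose (j-k) : ℤ) * (((n-i).choose (k-i) : ℤ)) else 0) * f i := by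
      intro k _; split <;> ring
    rw [Finset.sum_congr rfl h1, ← Finset.sum_mul, aux_inner18 n j i (by omega) hj]
  rw [Finset.sum_congr rfl houter]
  simp

/-- `nc G` is the maximum size of a set of nontrivial pairwise non-commuting
elements of `G`. -/
noncomputable def nc (G : Type*) [Group G] : ℕ :=
  sSup {n : ℕ | ∃ S : Finset G, S.card = n ∧ (∀ x ∈ S, x ≠ 1) ∧
    ∀ x ∈ S, ∀ y ∈ S, x ≠ y → x * y ≠ y * x}

/-- Shellability inequalities for a finite nonabelian TC-group `G`: with
`n = nc(G)` and `nc_k` the number of non-commuting sets of noncentral elements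
of size `k`, for all `1 ≤ j ≤ n`,
`(-1)^j C(n,j) + ∑_{k=1}^{j} (-1)^{j-k} C(n-k, j-k) nc_k ≥ 0`. -/
theorem stmt_18 {G : Type*} [Group G] [Fintype G]
    (hna : ∃ a b : G, a * b ≠ b * a)
    (htc : ∀ g h k : G, g ∉ Subgroup.center G → h ∉ Subgroup.center G →
      k ∉ Subgroup.center G → g * h = h * g → h * k = k * h → g * k = k * g) :
    ∀ j : ℕ, 1 ≤ j → j ≤ nc G →
      0 ≤ (-1 : ℤ) ^ j * ((nc G).choose j : ℤ) +
        ∑ k ∈ Finset.Icc 1 j, (-1 : ℤ) ^ (j - k) * ((nc G - k).choose (j - k) : ℤ) *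
          ((Finset.univ.filter (fun S : Finset G => S.card = k ∧
            (∀ x ∈ S, x ∉ Subgroup.center G) ∧
            ∀ x ∈ S, ∀ y ∈ S, x ≠ y → x * y ≠ y * x)).card : ℤ) := by
  intro j hj1 hjn
  -- the defining set of `nc`
  set A : Set ℕ := {n : ℕ | ∃ S : Finset G, S.card = n ∧ (∀ x ∈ S, x ≠ 1) ∧
    ∀ x ∈ S, ∀ y ∈ S, x ≠ y → x * y ≠ y * x} with hA
  have hbdd : BddAbove A := by
    refine ⟨Fintype.card G, fun m hm => ?_⟩
    obtain ⟨S, hS, -, -⟩ := hm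
    exact hS ▸ S.card_le_univ
  have hne : A.Nonempty := ⟨0, ∅, by simp⟩
  have hsup : nc G ∈ A := Nat.sSup_mem hne hbdd
  obtain ⟨R, hRcard, hRnt, hRnc⟩ := hsup
  -- nc G ≥ 2
  have h2 : 2 ≤ nc G := by
    obtain ⟨a, b, hab⟩ := hna
    have hab1 : a ≠ b := fun h => hab (by rw [h])
    have ha1 : a ≠ 1 := fun h => hab (by rw [h, one_mul, mul_one])
    have hb1 : b ≠ 1 := fun h => hab (by rw [h, one_mul, mul_one])
    have : (2 : ℕ) ∈ A := by
      refine ⟨{a, b}, ?_, ?_, ?_⟩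
      · rw [Finset.card_insert_of_notMem (by simp [hab1]), Finset.card_singleton]
      · intro x hx
        rcases Finset.mem_insert.mp hx with h | h
        · exact h ▸ ha1
        · exact (Finset.mem_singleton.mp h) ▸ hb1
      · intro x hx y hy hxy
        rcases Finset.mem_insert.mp hx with h | h <;>
          rcases Finset.mem_insert.mp hy with h' | h' <;>
            (try simp only [Finset.mem_singleton] at *)
        · exact absurd (h ▸ h' ▸ rfl) hxy
        · subst h; subst h'; exact hab
        · subst h; subst h'; exact fun hc => hab hc.symm
        · exact absurd (h ▸ h' ▸ rfl) hxy
    exact le_csSup hbdd this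
  -- all elements of R are noncentral
  have hRZ : ∀ x ∈ R, x ∉ Subgroup.center G := by
    intro x hx hxZ
    obtain ⟨y, hy, hyx⟩ := Finset.exists_mem_ne (by omega : 1 < R.card) x
    exact hRnc x hx y hy hyx.symm ((Subgroup.mem_center_iff.mp hxZ y).symm)
  -- maximality of R
  have hmax : ∀ g : G, g ∉ Subgroup.center G → ∃ r ∈ R, g * r = r * g := by
    intro g hg
    by_contra hcon
    push_neg at hcon
    have hgR : g ∉ R := fun h => hcon g h rfl
    have hg1 : g ≠ 1 := fun h => hg (h ▸ Subgroup.one_mem _)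
    have : nc G + 1 ≤ nc G := by
      refine le_csSup hbdd ⟨insert g R, ?_, ?_, ?_⟩
      · rw [Finset.card_insert_of_notMem hgR, hRcard]
      · intro x hx
        rcases Finset.mem_insert.mp hx with h | h
        · exact h ▸ hg1
        · exact hRnt x h
      · intro x hx y hy hxy
        rcases Finset.mem_insert.mp hx with h | h <;> rcases Finset.mem_insert.mp hy with h' | h'
        · exact absurd (h ▸ h' ▸ rfl) hxy
        · subst h; exact hcon y h'
        · subst h'; exact fun hc => hcon x h hc.symm
        · exact hRnc x h y h' hxy
    omega
  -- the function sending a noncentral element to the unique element of R commuting with it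
  set c : G → G := fun g => if h : ∃ r ∈ R, g * r = r * g then h.choose else 1 with hc
  have hcR : ∀ g ∉ Subgroup.center G, c g ∈ R ∧ g * c g = c g * g := by
    intro g hg
    have h := hmax g hg
    simp only [hc, dif_pos h]
    exact ⟨h.choose_spec.1, h.choose_spec.2⟩
  have huniq : ∀ g ∉ Subgroup.center G, ∀ r ∈ R, g * r = r * g → r = c g := by
    intro g hg r hr hgr
    by_contra hne'
    have := htc r g (c g) (hRZ r hr) hg (hRZ _ (hcR g hg).1) hgr.symm (hcR g hg).2
    exact hRnc r hr (c g) (hcR g hg).1 hne' this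
  have hcomm : ∀ g ∉ Subgroup.center G, ∀ h ∉ Subgroup.center G,
      (g * h = h * g ↔ c g = c h) := by
    intro g hg h hh
    constructor
    · intro hgh
      have h1 : c g * h = h * c g :=
        htc (c g) g h (hRZ _ (hcR g hg).1) hg hh (hcR g hg).2.symm hgh
      exact huniq h hh (c g) (hcR g hg).1 h1.symm
    · intro hcgch
      have h2 : c g * h = h * c g := by
        rw [hcgch]; exact (hcR h hh).2.symm
      exact htc g (c g) h hg (hRZ _ (hcR g hg).1) hh (hcR g hg).2 h2
  have hcfix : ∀ r ∈ R, c r = r := fun r hr => (huniq r (hRZ r hr) r hr rfl).symm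
  -- the key counting lemma
  have hcount : ∀ k : ℕ, (Finset.univ.filter (fun S : Finset G => S.card = k ∧
      (∀ x ∈ S, x ∉ Subgroup.center G) ∧
      ∀ x ∈ S, ∀ y ∈ S, x ≠ y → x * y ≠ y * x)).card
      = ∑ i ∈ Finset.range (k+1), (nc G - i).choose (k - i) *
          (Finset.univ.filter (fun S : Finset G => S.card = i ∧
            (∀ x ∈ S, x ∉ Subgroup.center G) ∧
            (∀ x ∈ S, ∀ y ∈ S, x ≠ y → x * y ≠ y * x) ∧ ∀ x ∈ S, x ∉ R)).card := by
    intro k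
    set T : Finset (Finset G) := Finset.univ.filter (fun S' : Finset G => S'.card ≤ k ∧
      (∀ x ∈ S', x ∉ Subgroup.center G) ∧
      (∀ x ∈ S', ∀ y ∈ S', x ≠ y → x * y ≠ y * x) ∧ ∀ x ∈ S', x ∉ R) with hT
    have hmaps : ∀ S ∈ Finset.univ.filter (fun S : Finset G => S.card = k ∧
        (∀ x ∈ S, x ∉ Subgroup.center G) ∧
        ∀ x ∈ S, ∀ y ∈ S, x ≠ y → x * y ≠ y * x), S \ R ∈ T := by
      intro S hS
      rw [Finset.mem_filter] at hS
      obtain ⟨-, hSk, hSZ, hSnc⟩ := hS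
      rw [hT, Finset.mem_filter]
      refine ⟨Finset.mem_univ _, ?_, ?_, ?_, ?_⟩
      · exact hSk ▸ Finset.card_le_card (Finset.sdiff_subset)
      · exact fun x hx => hSZ x (Finset.mem_sdiff.mp hx).1
      · exact fun x hx y hy => hSnc x (Finset.mem_sdiff.mp hx).1 y (Finset.mem_sdiff.mp hy).1
      · exact fun x hx => (Finset.mem_sdiff.mp hx).2
    rw [Finset.card_eq_sum_card_fiberwise hmaps]
    have hfiber : ∀ S' ∈ T,
        ((Finset.univ.filter (fun S : Finset G => S.card = k ∧
          (∀ x ∈ S, x ∉ Subgroup.center G) ∧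
          ∀ x ∈ S, ∀ y ∈ S, x ≠ y → x * y ≠ y * x)).filter (fun S => S \ R = S')).card
        = (nc G - S'.card).choose (k - S'.card) := by
      intro S' hS'
      rw [hT, Finset.mem_filter] at hS'
      obtain ⟨-, hS'k, hS'Z, hS'nc, hS'R⟩ := hS'
      have himg : S'.image c ⊆ R := by
        intro x hx
        obtain ⟨y, hy, rfl⟩ := Finset.mem_image.mp hx
        exact (hcR y (hS'Z y hy)).1
      have hinj : (S'.image c).card = S'.card := by
        apply Finset.card_image_of_injOn
        intro x hx y hy hcxy
        by_contra hxy
        exact hS'nc x hx y hy hxy ((hcomm x (hS'Z x hx) y (hS'Z y hy)).mpr hcxy)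
      have hcardRdiff : (R \ S'.image c).card = nc G - S'.card := by
        rw [Finset.card_sdiff_of_subset himg, hRcard, hinj]
      have hbij : ((Finset.univ.filter (fun S : Finset G => S.card = k ∧
          (∀ x ∈ S, x ∉ Subgroup.center G) ∧
          ∀ x ∈ S, ∀ y ∈ S, x ≠ y → x * y ≠ y * x)).filter (fun S => S \ R = S')).card
          = (Finset.powersetCard (k - S'.card) (R \ S'.image c)).card := by
        apply Finset.card_nbij' (i := fun S => S ∩ R) (j := fun W => S' ∪ W)
        · -- forward map lands in target
          intro S hS
          rw [Finset.mem_coe, Finset.mem_filter, Finset.mem_filter] at hS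
          obtain ⟨⟨-, hSk, hSZ, hSnc⟩, hQ⟩ := hS
          beta_reduce
          rw [Finset.mem_coe, Finset.mem_powersetCard]
          constructor
          · intro x hx
            rw [Finset.mem_inter] at hx
            rw [Finset.mem_sdiff]
            refine ⟨hx.2, ?_⟩
            intro hximg
            obtain ⟨y, hy, hyx⟩ := Finset.mem_image.mp hximg
            rw [← hQ] at hy
            have hyS : y ∈ S := (Finset.mem_sdiff.mp hy).1
            have hyR : y ∉ R := (Finset.mem_sdiff.mp hy).2
            have hyxne : y ≠ x := fun h => hyR (h ▸ hx.2)
            apply hSnc y hyS x hx.1 hyxne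
            rw [← hyx]
            exact (hcR y (hSZ y hyS)).2
          · have hcards := Finset.card_sdiff_add_card_inter S R
            rw [hQ] at hcards
            omega
        · -- inverse map lands in source
          intro W hW
          rw [Finset.mem_coe, Finset.mem_powersetCard] at hW
          obtain ⟨hWsub, hWcard⟩ := hW
          have hWR : ∀ x ∈ W, x ∈ R := fun x hx => (Finset.mem_sdiff.mp (hWsub hx)).1
          have hdisj : Disjoint S' W := by
            rw [Finset.disjoint_left]
            intro x hx hxW
            exact hS'R x hx (hWR x hxW)
          beta_reduce
          rw [Finset.mem_coe, Finset.mem_filter, Finset.mem_filter]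
          refine ⟨⟨Finset.mem_univ _, ?_, ?_, ?_⟩, ?_⟩
          · rw [Finset.card_union_of_disjoint hdisj, hWcard]
            omega
          · intro x hx
            rcases Finset.mem_union.mp hx with h | h
            · exact hS'Z x h
            · exact hRZ x (hWR x h)
          · intro x hx y hy hxy hcomm'
            rcases Finset.mem_union.mp hx with h | h <;> rcases Finset.mem_union.mp hy with h' | h'
            · exact hS'nc x h y h' hxy hcomm'
            · have hyR : y ∈ R := hWR y h'
              have hcc : c x = c y := (hcomm x (hS'Z x h) y (hRZ y hyR)).mp hcomm'
              rw [hcfix y hyR] at hcc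
              exact (Finset.mem_sdiff.mp (hWsub h')).2 (Finset.mem_image.mpr ⟨x, h, hcc⟩)
            · have hxR : x ∈ R := hWR x h
              have hcc : c y = c x := (hcomm y (hS'Z y h') x (hRZ x hxR)).mp hcomm'.symm
              rw [hcfix x hxR] at hcc
              exact (Finset.mem_sdiff.mp (hWsub h)).2 (Finset.mem_image.mpr ⟨y, h', hcc⟩)
            · exact hRnc x (hWR x h) y (hWR y h') hxy hcomm'
          · ext x
            rw [Finset.mem_sdiff, Finset.mem_union]
            constructor
            · rintro ⟨h | h, hxR⟩
              · exact h
              · exact absurd (hWR x h) hxR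
            · intro hx
              exact ⟨Or.inl hx, hS'R x hx⟩
        · -- left inverse
          intro S hS
          rw [Finset.mem_coe, Finset.mem_filter] at hS
          rw [← hS.2]
          exact Finset.sdiff_union_inter S R
        · -- right inverse
          intro W hW
          rw [Finset.mem_coe, Finset.mem_powersetCard] at hW
          beta_reduce
          have hWR : ∀ x ∈ W, x ∈ R := fun x hx => (Finset.mem_sdiff.mp (hW.1 hx)).1
          ext x
          rw [Finset.mem_inter, Finset.mem_union]
          constructor
          · rintro ⟨h | h, hxR⟩
            · exact absurd hxR (hS'R x h)
            · exact h
          · intro hx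
            exact ⟨Or.inr hx, hWR x hx⟩
      rw [hbij, Finset.card_powersetCard, hcardRdiff]
    rw [Finset.sum_congr rfl hfiber]
    have hmaps2 : ∀ S' ∈ T, S'.card ∈ Finset.range (k+1) := by
      intro S' h
      rw [hT, Finset.mem_filter] at h
      rw [Finset.mem_range, Nat.lt_succ_iff]
      exact h.2.1
    rw [← Finset.sum_fiberwise_of_maps_to' hmaps2 (fun i => (nc G - i).choose (k - i))]
    apply Finset.sum_congr rfl
    intro i hi
    rw [Finset.sum_const, smul_eq_mul]
    have hTi : Finset.filter (fun S' => S'.card = i) T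
        = Finset.univ.filter (fun S : Finset G => S.card = i ∧
            (∀ x ∈ S, x ∉ Subgroup.center G) ∧
            (∀ x ∈ S, ∀ y ∈ S, x ≠ y → x * y ≠ y * x) ∧ ∀ x ∈ S, x ∉ R) := by
      rw [Finset.mem_range, Nat.lt_succ_iff] at hi
      ext S
      rw [hT, Finset.mem_filter, Finset.mem_filter, Finset.mem_filter]
      constructor
      · rintro ⟨⟨h0, h1, h2, h3, h4⟩, h5⟩
        exact ⟨h0, h5, h2, h3, h4⟩
      · rintro ⟨h0, h1, h2, h3, h4⟩
        exact ⟨⟨h0, h1 ▸ hi, h2, h3, h4⟩, h1⟩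
    rw [hTi, mul_comm]
  -- Assembly
  have hN0 : (Finset.univ.filter (fun S : Finset G => S.card = 0 ∧
      (∀ x ∈ S, x ∉ Subgroup.center G) ∧
      ∀ x ∈ S, ∀ y ∈ S, x ≠ y → x * y ≠ y * x)).card = 1 := by
    have h0 : (Finset.univ.filter (fun S : Finset G => S.card = 0 ∧
        (∀ x ∈ S, x ∉ Subgroup.center G) ∧
        ∀ x ∈ S, ∀ y ∈ S, x ≠ y → x * y ≠ y * x)) = {∅} := by
      ext S
      simp only [Finset.mem_filter, Finset.mem_univ, true_and, Finset.mem_singleton,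
        Finset.card_eq_zero]
      constructor
      · rintro ⟨h, -, -⟩
        exact h
      · rintro rfl
        simp
    rw [h0, Finset.card_singleton]
  have hfinal : ∑ k ∈ Finset.range (j+1), (-1:ℤ)^(j-k) * ((nc G - k).choose (j-k) : ℤ) *
      ((Finset.univ.filter (fun S : Finset G => S.card = k ∧
        (∀ x ∈ S, x ∉ Subgroup.center G) ∧
        ∀ x ∈ S, ∀ y ∈ S, x ≠ y → x * y ≠ y * x)).card : ℤ)
      = ((Finset.univ.filter (fun S : Finset G => S.card = j ∧
          (∀ x ∈ S, x ∉ Subgroup.center G) ∧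
          (∀ x ∈ S, ∀ y ∈ S, x ≠ y → x * y ≠ y * x) ∧ ∀ x ∈ S, x ∉ R)).card : ℤ) := by
    have hkey := aux_key18 (nc G) j hjn
      (fun i => ((Finset.univ.filter (fun S : Finset G => S.card = i ∧
          (∀ x ∈ S, x ∉ Subgroup.center G) ∧
          (∀ x ∈ S, ∀ y ∈ S, x ≠ y → x * y ≠ y * x) ∧ ∀ x ∈ S, x ∉ R)).card : ℤ))
    rw [← hkey]
    apply Finset.sum_congr rfl
    intro k hk
    rw [hcount k]
    push_cast
    ring
  have hrange : Finset.range (j+1) = insert 0 (Finset.Icc 1 j) := by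
    ext x
    simp [Nat.lt_succ_iff]
    omega
  rw [hrange, Finset.sum_insert (by simp), hN0] at hfinal
  simp only [Nat.sub_zero, Nat.cast_one, mul_one] at hfinal
  rw [hfinal]
  exact Int.natCast_nonneg _
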